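/- arXiv:math/0208046 — 2 statements merged into one kernel-verified Lean document; each statement's English description precedes it below -/
import Mathlib

section
/- Let n and i be integers with 1 ≤ i ≤ n−1, and let π be a permutation of length n which avoids both 1243 and 2143 and satisfies π(i+1) = n. Then exactly one of the values 1, 2, …, n−i appears among π(1), π(2), …, π(i) (i.e., to the left of the entry n). -/
/-- `π` contains the pattern `σ`. -/
def PContains {k n : ℕ} (σ : Equiv.Perm (Fin k)) (π : Equiv.Perm (Fin n)) : Prop :=
  ∃ f : Fin k → Fin n, StrictMono f ∧ ∀ a b : Fin k, π (f a) < π (f b) ↔ σ a < σ b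

/-- `π` avoids the pattern `σ`. -/
def PAvoids {k n : ℕ} (σ : Equiv.Perm (Fin k)) (π : Equiv.Perm (Fin n)) : Prop :=
  ¬ PContains σ π

/-- The pattern 1243 (in one-line notation, 1-based). -/
def p1243 : Equiv.Perm (Fin 4) := ⟨![0, 1, 3, 2], ![0, 1, 3, 2], by decide, by decide⟩

/-- The pattern 2143 (in one-line notation, 1-based). -/
def p2143 : Equiv.Perm (Fin 4) := ⟨![1, 0, 3, 2], ![1, 0, 3, 2], by decide, by decide⟩

/-- `π` avoids both 1243 and 2143. -/
def AvoidsBoth {n : ℕ} (π : Equiv.Perm (Fin n)) : Prop :=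
  PAvoids p1243 π ∧ PAvoids p2143 π

/-- `τ_k(π)`: the number of increasing subsequences of length `k` in `π`
(with the convention `τ_0 = 0`). -/
noncomputable def tauPerm (k : ℕ) {n : ℕ} (π : Equiv.Perm (Fin n)) : ℕ :=
  if k = 0 then 0 else
    Nat.card {f : Fin k → Fin n // StrictMono f ∧ StrictMono (fun a => π (f a))}

/-- The number of occurrences (subsequences of type `σ`) of the pattern `σ` in `π`. -/
noncomputable def numOcc {k n : ℕ} (σ : Equiv.Perm (Fin k)) (π : Equiv.Perm (Fin n)) : ℕ :=
  Nat.card {f : Fin k → Fin n // StrictMono f ∧ ∀ a b : Fin k, π (f a) < π (f b) ↔ σ a < σ b}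

/-- Filtering by a condition on `π j` has the same cardinality as filtering by the
condition on values. -/
lemma card_filter_perm {n : ℕ} (π : Equiv.Perm (Fin n)) (q : Fin n → Prop) [DecidablePred q] :
    (Finset.univ.filter fun j => q (π j)).card = (Finset.univ.filter q).card := by
  rw [← Finset.card_map π.toEmbedding]
  congr 1
  ext v
  simp only [Finset.mem_map, Finset.mem_filter, Finset.mem_univ, true_and,
    Equiv.coe_toEmbedding]
  constructor
  · rintro ⟨j, hj, rfl⟩; exact hj
  · intro hv; exact ⟨π.symm v, by simpa using hv, by simp⟩

/-- If `j1 < j2 < i' < y` positionally and `π j1, π j2 < π y < π i'` in value, then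
`π` contains 1243 or 2143 (according to the relative order of `π j1, π j2`). -/
lemma contains_of_chain {n : ℕ} (π : Equiv.Perm (Fin n)) (j1 j2 i' y : Fin n)
    (h12 : j1.1 < j2.1) (h2i : j2.1 < i'.1) (hiy : i'.1 < y.1)
    (a1 : (π j1 : ℕ) < (π y : ℕ)) (a2 : (π j2 : ℕ) < (π y : ℕ))
    (a3 : (π y : ℕ) < (π i' : ℕ)) (hne : (π j1 : ℕ) ≠ (π j2 : ℕ)) :
    PContains p1243 π ∨ PContains p2143 π := by
  have hmono : StrictMono (fun c : Fin 4 =>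
      if c.1 = 0 then j1 else if c.1 = 1 then j2 else if c.1 = 2 then i' else y) := by
    intro c d hcd
    rw [Fin.lt_def] at hcd ⊢
    fin_cases c <;> fin_cases d <;> simp_all <;> omega
  rcases Nat.lt_or_ge (π j1 : ℕ) (π j2 : ℕ) with hlt | hge
  · left
    refine ⟨_, hmono, ?_⟩
    intro c d
    rw [Fin.lt_def, Fin.lt_def]
    have hp : ∀ e : Fin 4, (p1243 e : ℕ) =
        if e.1 = 0 then 0 else if e.1 = 1 then 1 else if e.1 = 2 then 3 else 2 := by decide
    rw [hp, hp]
    fin_cases c <;> fin_cases d <;> simp <;> omega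
  · right
    have hlt : (π j2 : ℕ) < (π j1 : ℕ) := lt_of_le_of_ne hge (Ne.symm hne)
    refine ⟨_, hmono, ?_⟩
    intro c d
    rw [Fin.lt_def, Fin.lt_def]
    have hp : ∀ e : Fin 4, (p2143 e : ℕ) =
        if e.1 = 0 then 1 else if e.1 = 1 then 0 else if e.1 = 2 then 3 else 2 := by decide
    rw [hp, hp]
    fin_cases c <;> fin_cases d <;> simp <;> omega

/-- If 1 ≤ i ≤ n−1 and π is a permutation of length n avoiding 1243 and
2143 with π(i+1) = n (one-line, 1-based), then exactly one of the values 1, …, n−i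
appears among π(1), …, π(i), i.e. to the left of the entry n.  (In 0-based terms:
there is exactly one position j < i whose value is < n − i.) -/
theorem stmt_1 (n i : ℕ) (h1 : 1 ≤ i) (h2 : i ≤ n - 1)
    (π : Equiv.Perm (Fin n)) (hav : AvoidsBoth π)
    (hπ : (π ⟨i, by omega⟩ : ℕ) = n - 1) :
    ∃! j : Fin n, j.1 < i ∧ (π j : ℕ) < n - i := by
  have hn : 2 ≤ n := by omega
  have hin : i < n := by omega
  set i' : Fin n := ⟨i, hin⟩ with hi'
  set a : Fin n := ⟨n - i, by omega⟩ with ha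
  have hi'v : (i' : ℕ) = i := rfl
  have hav' : (a : ℕ) = n - i := rfl
  -- Existence by pigeonhole.
  have hex : ∃ j : Fin n, j.1 < i ∧ (π j : ℕ) < n - i := by
    by_contra hc
    push_neg at hc
    have hsub : (Finset.univ.filter fun j : Fin n => π j < a) ⊆ Finset.Ioi i' := by
      intro j hj
      simp only [Finset.mem_filter, Finset.mem_univ, true_and] at hj
      have hja : (π j : ℕ) < n - i := by rw [Fin.lt_def, hav'] at hj; exact hj
      have hji : ¬ j.1 < i := fun h => absurd hja (Nat.not_lt.mpr (hc j h))
      have hne : j ≠ i' := by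
        intro h; rw [h, hπ] at hja; omega
      have hne' : j.1 ≠ i := fun h => hne (Fin.ext h)
      simp only [Finset.mem_Ioi, Fin.lt_def, hi'v]
      omega
    have h3 : (Finset.univ.filter fun j : Fin n => π j < a).card = n - i := by
      rw [card_filter_perm π (· < a)]
      have he : Finset.univ.filter (· < a) = Finset.Iio a := by ext; simp
      rw [he, Fin.card_Iio, hav']
    have h4 := Finset.card_le_card hsub
    rw [h3, Fin.card_Ioi, hi'v] at h4
    omega
  obtain ⟨j0, hj0⟩ := hex
  -- Key: no two distinct positions both satisfy the property.
  have key : ∀ j1 j2 : Fin n, j1 < j2 → j2.1 < i → (π j1 : ℕ) < n - i →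
      (π j2 : ℕ) < n - i → False := by
    intro j1 j2 h12 hj2i hv1 hv2
    have h12' : j1.1 < j2.1 := h12
    have hj1i : j1.1 < i := lt_trans h12' hj2i
    have hi2 : 2 ≤ i := by omega
    -- there is some position y > i with n - i ≤ π y < n - 1
    have hy : ∃ y : Fin n, i < y.1 ∧ n - i ≤ (π y : ℕ) ∧ (π y : ℕ) < n - 1 := by
      by_contra hc
      push_neg at hc
      set b : Fin n := ⟨n - 1, by omega⟩ with hb
      have hbv : (b : ℕ) = n - 1 := rfl
      have hcard : (Finset.univ.filter fun j : Fin n => a ≤ π j ∧ π j < b).card = i - 1 := by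
        rw [card_filter_perm π (fun v => a ≤ v ∧ v < b)]
        have he : Finset.univ.filter (fun v : Fin n => a ≤ v ∧ v < b) = Finset.Ico a b := by
          ext; simp [Finset.mem_Ico]
        rw [he, Fin.card_Ico, hav', hbv]
        omega
      have hsub : (Finset.univ.filter fun j : Fin n => a ≤ π j ∧ π j < b) ⊆
          (Finset.Iio i' \ {j1, j2}) := by
        intro y hymem
        simp only [Finset.mem_filter, Finset.mem_univ, true_and] at hymem
        obtain ⟨hy1, hy2⟩ := hymem
        have hy1' : n - i ≤ (π y : ℕ) := by rw [Fin.le_def, hav'] at hy1; exact hy1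
        have hy2' : (π y : ℕ) < n - 1 := by rw [Fin.lt_def, hbv] at hy2; exact hy2
        have hne : y ≠ i' := by intro h; rw [h, hπ] at hy2'; omega
        have hne' : y.1 ≠ i := fun h => hne (Fin.ext h)
        have hylt : y.1 < i := by
          rcases Nat.lt_trichotomy y.1 i with h | h | h
          · exact h
          · exact absurd h hne'
          · exact absurd (hc y h hy1') (by omega)
        simp only [Finset.mem_sdiff, Finset.mem_Iio, Finset.mem_insert, Finset.mem_singleton]
        refine ⟨Fin.lt_def.mpr hylt, ?_⟩
        rintro (rfl | rfl) <;> omega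
      have h4 := Finset.card_le_card hsub
      rw [hcard] at h4
      have h5 : (Finset.Iio i' \ {j1, j2}).card ≤ i - 2 := by
        have hj12 : j1 ≠ j2 := ne_of_lt h12
        have hsub2 : ({j1, j2} : Finset (Fin n)) ⊆ Finset.Iio i' := by
          intro x hx
          simp only [Finset.mem_insert, Finset.mem_singleton] at hx
          rcases hx with rfl | rfl
          exacts [Finset.mem_Iio.mpr (Fin.lt_def.mpr hj1i), Finset.mem_Iio.mpr (Fin.lt_def.mpr hj2i)]
        rw [Finset.card_sdiff_of_subset hsub2, Fin.card_Iio, Finset.card_insert_of_notMem (by simpa),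
          Finset.card_singleton, hi'v]
      omega
    obtain ⟨y, hyi, hya, hyb⟩ := hy
    have hval_i : (π i' : ℕ) = n - 1 := hπ
    have hne12 : (π j1 : ℕ) ≠ (π j2 : ℕ) := by
      intro h
      exact absurd (π.injective (Fin.ext h)) (ne_of_lt h12)
    have := contains_of_chain π j1 j2 i' y h12' hj2i (by omega)
      (by omega) (by omega) (by omega) hne12
    rcases this with h | h
    · exact hav.1 h
    · exact hav.2 h
  refine ⟨j0, hj0, ?_⟩
  intro j hj
  by_contra hne
  rcases lt_or_gt_of_ne (hne : j ≠ j0) with h | h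
  · exact key j j0 h hj0.1 hj.2 hj0.2
  · exact key j0 j h hj.1 hj0.2 hj.2
end

section
/- Let τ be a nonempty permutation of length m which avoids both 1243 and 2143, and let τk denote the permutation (τ(1), …, τ(m), m+1) of length m+1. Then the following are equivalent: (a) τ(m) = m (the last entry of τ is its largest entry); (b) for every n ≥ 0, the number of permutations of length n avoiding 1243 and 2143 which avoid τk and contain exactly one subsequence of type τ equals the number of permutations of length n avoiding 1243 and 2143 which contain exactly one subsequence of type τ. -/
/-- Append a new largest entry at the end of a permutation. -/
def appendMax {m : ℕ} (ρ : Equiv.Perm (Fin m)) : Equiv.Perm (Fin (m + 1)) where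
  toFun := Fin.snoc (fun i => (ρ i).castSucc) (Fin.last m)
  invFun := Fin.snoc (fun i => (ρ.symm i).castSucc) (Fin.last m)
  left_inv := by
    intro x
    induction x using Fin.lastCases with
    | last => simp
    | cast i => simp
  right_inv := by
    intro x
    induction x using Fin.lastCases with
    | last => simp
    | cast i => simp


section Aux

lemma strictMono_fin_eq_id {m : ℕ} {f : Fin m → Fin m} (hf : StrictMono f) : f = id := by
  have hsurj : Function.Surjective f := Finite.surjective_of_injective hf.injective
  have h2 : StrictMono (id : Fin m → Fin m) := strictMono_id
  haveI : WellFoundedLT (Fin m) := inferInstance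
  have key := Set.range_injOn_strictMono (β := Fin m) (γ := Fin m)
  exact key hf h2 (by rw [Set.range_eq_univ.2 hsurj]; simp)

lemma appendMax_castSucc {m : ℕ} (ρ : Equiv.Perm (Fin m)) (i : Fin m) :
    appendMax ρ i.castSucc = (ρ i).castSucc := by
  simp [appendMax]

lemma appendMax_last {m : ℕ} (ρ : Equiv.Perm (Fin m)) :
    appendMax ρ (Fin.last m) = Fin.last m := by
  simp [appendMax]

/-- Any permutation contains itself. -/
lemma pcontains_self {n : ℕ} (π : Equiv.Perm (Fin n)) : PContains π π :=
  ⟨id, strictMono_id, fun _ _ => Iff.rfl⟩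

/-- Appending a max preserves avoidance of a length-4 pattern whose last entry is
smaller than its penultimate entry. -/
lemma appendMax_avoids {m : ℕ} (τ : Equiv.Perm (Fin m)) (σ : Equiv.Perm (Fin 4))
    (hσ : σ 3 < σ 2) (h : PAvoids σ τ) : PAvoids σ (appendMax τ) := by
  rintro ⟨f, hf, hpat⟩
  by_cases hlast : ∃ a, f a = Fin.last m
  · obtain ⟨a₀, ha₀⟩ := hlast
    have ha3 : a₀ = 3 := by
      by_contra hne
      have hv : a₀.val ≠ 3 := fun h' => hne (Fin.ext h')
      have hlt : a₀ < 3 := by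
        rw [Fin.lt_def]
        have := a₀.isLt
        omega
      have h2 := hf hlt
      rw [ha₀] at h2
      exact absurd h2 (not_lt.mpr (Fin.le_last (f 3)))
    have h23 : f 2 ≠ f 3 := fun h' => absurd (hf.injective h') (by decide)
    have hlt : appendMax τ (f 2) < appendMax τ (f 3) := by
      rw [ha3] at ha₀
      rw [ha₀, appendMax_last]
      have hne2 : appendMax τ (f 2) ≠ Fin.last m := by
        intro h'
        rw [← appendMax_last τ, ← ha₀] at h'
        exact h23 ((appendMax τ).injective h')
      exact lt_of_le_of_ne (Fin.le_last _) hne2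
    rw [hpat 2 3] at hlt
    exact absurd hlt hσ.asymm
  · push_neg at hlast
    have hv : ∀ c : Fin 4, (f c).val < m := by
      intro c
      have h1 := (f c).isLt
      have h2 : (f c).val ≠ m := fun h' => hlast c (Fin.ext h')
      omega
    have key : ∀ c : Fin 4, f c = (⟨(f c).val, hv c⟩ : Fin m).castSucc :=
      fun c => Fin.ext rfl
    refine h ⟨fun a => ⟨(f a).val, hv a⟩, fun a b hab => hf hab, fun a b => ?_⟩
    have hp := hpat a b
    rw [key a, key b, appendMax_castSucc, appendMax_castSucc,
      Fin.castSucc_lt_castSucc_iff] at hp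
    exact hp

lemma castSucc_occ_pattern {m n : ℕ} (τ : Equiv.Perm (Fin m)) (π : Equiv.Perm (Fin n))
    (f : Fin (m + 1) → Fin n)
    (hpat : ∀ a b : Fin (m + 1), π (f a) < π (f b) ↔ appendMax τ a < appendMax τ b)
    (a b : Fin m) : π (f a.castSucc) < π (f b.castSucc) ↔ τ a < τ b := by
  rw [hpat, appendMax_castSucc, appendMax_castSucc, Fin.castSucc_lt_castSucc_iff]

/-- If the last entry of `τ` is its largest, then any `π` with exactly one occurrence
of `τ` avoids `appendMax τ`. -/
lemma avoids_appendMax_of_lastMax {m n : ℕ} (hm : 1 ≤ m) (τ : Equiv.Perm (Fin m))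
    (hmax : τ ⟨m - 1, Nat.sub_lt hm Nat.one_pos⟩ = ⟨m - 1, Nat.sub_lt hm Nat.one_pos⟩)
    (π : Equiv.Perm (Fin n)) (h1 : numOcc τ π = 1) : PAvoids (appendMax τ) π := by
  rintro ⟨f, hf, hpat⟩
  set L : Fin m := ⟨m - 1, Nat.sub_lt hm Nat.one_pos⟩ with hLdef
  have hLtop : ∀ a : Fin m, a ≤ L := by
    intro a
    rw [Fin.le_def]
    have := a.isLt
    simp only [hLdef]
    omega
  have hτmax : ∀ a : Fin m, a ≠ L → τ a < τ L := by
    intro a ha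
    refine lt_of_le_of_ne ?_ (fun h => ha (τ.injective h))
    rw [hmax]; exact hLtop _
  have hsub : Subsingleton {g : Fin m → Fin n //
      StrictMono g ∧ ∀ a b : Fin m, π (g a) < π (g b) ↔ τ a < τ b} :=
    (Nat.card_eq_one_iff_unique.mp (by simpa [numOcc] using h1)).1
  set g₁ : Fin m → Fin n := fun a => f a.castSucc with hg1
  set g₂ : Fin m → Fin n := fun a => if a = L then f (Fin.last m) else f a.castSucc with hg2
  have hg₁mono : StrictMono g₁ := fun a b hab => hf (by rwa [Fin.castSucc_lt_castSucc_iff])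
  have hg₁pat : ∀ a b : Fin m, π (g₁ a) < π (g₁ b) ↔ τ a < τ b := fun a b =>
    castSucc_occ_pattern τ π f hpat a b
  have hg₂mono : StrictMono g₂ := by
    intro a b hab
    have ha : a ≠ L := fun h => absurd (lt_of_lt_of_le hab (hLtop b)) (h ▸ lt_irrefl L)
    by_cases hb : b = L
    · simp only [hg2, ha, hb, if_true, if_false, if_neg ha, if_pos rfl]
      exact hf (Fin.castSucc_lt_last a)
    · simp only [hg2, if_neg ha, if_neg hb]
      exact hf (by rwa [Fin.castSucc_lt_castSucc_iff])
  have hg₂pat : ∀ a b : Fin m, π (g₂ a) < π (g₂ b) ↔ τ a < τ b := by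
    intro a b
    by_cases ha : a = L <;> by_cases hb : b = L
    · subst ha; subst hb; simp
    · subst ha
      simp only [hg2, if_pos rfl, if_neg hb]
      refine iff_of_false ?_ (hτmax b hb).asymm
      rw [hpat, appendMax_last]
      exact not_lt.mpr (Fin.le_last _)
    · subst hb
      simp only [hg2, if_pos rfl, if_neg ha]
      refine iff_of_true ?_ (hτmax a ha)
      rw [hpat, appendMax_castSucc, appendMax_last]
      exact Fin.castSucc_lt_last _
    · simp only [hg2, if_neg ha, if_neg hb]
      exact castSucc_occ_pattern τ π f hpat a b
  have heq : (⟨g₁, hg₁mono, hg₁pat⟩ : {g : Fin m → Fin n //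
      StrictMono g ∧ ∀ a b : Fin m, π (g a) < π (g b) ↔ τ a < τ b}) = ⟨g₂, hg₂mono, hg₂pat⟩ :=
    Subsingleton.elim _ _
  have heqL : g₁ L = g₂ L := by rw [Subtype.mk_eq_mk.mp heq]
  simp only [hg1, hg2, if_pos rfl] at heqL
  have := hf.injective heqL
  exact absurd this (Fin.castSucc_lt_last L).ne

/-- If the last entry of `τ` is not its largest, `appendMax τ` has exactly one
occurrence of `τ`. -/
lemma numOcc_appendMax {m : ℕ} (hm : 1 ≤ m) (τ : Equiv.Perm (Fin m))
    (hne : τ ⟨m - 1, Nat.sub_lt hm Nat.one_pos⟩ ≠ ⟨m - 1, Nat.sub_lt hm Nat.one_pos⟩) : numOcc τ (appendMax τ) = 1 := by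
  set L : Fin m := ⟨m - 1, Nat.sub_lt hm Nat.one_pos⟩ with hLdef
  have hLtop : ∀ a : Fin m, a ≤ L := by
    intro a
    rw [Fin.le_def]
    have := a.isLt
    simp only [hLdef]
    omega
  have key : ∀ g : Fin m → Fin (m + 1), StrictMono g →
      (∀ a b : Fin m, appendMax τ (g a) < appendMax τ (g b) ↔ τ a < τ b) →
      g = fun a => a.castSucc := by
    intro g hg hgpat
    by_cases hlast : ∃ a, g a = Fin.last m
    · exfalso
      obtain ⟨a₀, ha₀⟩ := hlast
      have ha₀L : a₀ = L := by
        refine le_antisymm (hLtop _) (not_lt.mp fun h => ?_)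
        have := hg h
        rw [ha₀] at this
        exact absurd this (not_lt.mpr (Fin.le_last _))
      rw [ha₀L] at ha₀
      have hτmax : ∀ a : Fin m, a ≠ L → τ a < τ L := by
        intro a ha
        rw [← hgpat, ha₀, appendMax_last]
        refine lt_of_le_of_ne (Fin.le_last _) fun h => ?_
        rw [← appendMax_last τ] at h
        have h2 := (appendMax τ).injective h
        rw [← ha₀] at h2
        exact ha (hg.injective h2)
      rcases eq_or_ne (τ.symm L) L with hcL | hcL
      · apply hne
        have h2 := congrArg τ hcL
        rw [Equiv.apply_symm_apply] at h2
        exact h2.symm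
      · have h1 : τ (τ.symm L) < τ L := hτmax _ hcL
        rw [Equiv.apply_symm_apply] at h1
        exact absurd (lt_of_lt_of_le h1 (hLtop _)) (lt_irrefl _)
    · push_neg at hlast
      have hv : ∀ c : Fin m, (g c).val < m := by
        intro c
        have h1 := (g c).isLt
        have h2 : (g c).val ≠ m := fun h' => hlast c (Fin.ext h')
        omega
      set g' : Fin m → Fin m := fun a => ⟨(g a).val, hv a⟩ with hg'
      have hg'id : g' = id := strictMono_fin_eq_id (fun a b hab => hg hab)
      funext a
      have : g a = (g' a).castSucc := Fin.ext rfl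
      rw [this, hg'id]
      rfl
  rw [numOcc]
  rw [Nat.card_eq_one_iff_unique]
  constructor
  · constructor
    rintro ⟨g, hg, hgpat⟩ ⟨g2, hg2, hg2pat⟩
    simp only [Subtype.mk_eq_mk]
    rw [key g hg hgpat, key g2 hg2 hg2pat]
  · refine ⟨⟨fun a => a.castSucc, fun a b hab => by rwa [Fin.castSucc_lt_castSucc_iff],
      fun a b => ?_⟩⟩
    rw [appendMax_castSucc, appendMax_castSucc, Fin.castSucc_lt_castSucc_iff]

end Aux

/-- Let τ be a nonempty permutation of length m avoiding 1243 and 2143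
and let τk (of length m+1) be τ with a new largest entry appended.  Then the last
entry of τ is its largest entry iff for every n the number of permutations of length n
avoiding 1243, 2143, and τk with exactly one subsequence of type τ equals the number
of permutations of length n avoiding 1243 and 2143 with exactly one subsequence of
type τ. -/
theorem stmt_18 (m : ℕ) (hm : 1 ≤ m) (τ : Equiv.Perm (Fin m)) (hτ : AvoidsBoth τ) :
    (τ ⟨m - 1, by omega⟩ : ℕ) = m - 1 ↔
      ∀ n : ℕ,
        Nat.card {π : Equiv.Perm (Fin n) //
            AvoidsBoth π ∧ PAvoids (appendMax τ) π ∧ numOcc τ π = 1} =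
          Nat.card {π : Equiv.Perm (Fin n) // AvoidsBoth π ∧ numOcc τ π = 1} := by
  constructor
  · intro hmax n
    have hmax' : τ ⟨m - 1, by omega⟩ = ⟨m - 1, by omega⟩ := Fin.ext hmax
    apply Nat.card_congr
    apply Equiv.subtypeEquivRight
    intro π
    constructor
    · rintro ⟨h1, _, h3⟩
      exact ⟨h1, h3⟩
    · rintro ⟨h1, h3⟩
      exact ⟨h1, avoids_appendMax_of_lastMax hm τ hmax' π h3, h3⟩
  · intro hall
    by_contra hne
    have hneF : τ ⟨m - 1, by omega⟩ ≠ ⟨m - 1, by omega⟩ := fun h => hne (congrArg Fin.val h)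
    have h := hall (m + 1)
    set s : Set (Equiv.Perm (Fin (m + 1))) :=
      {π | AvoidsBoth π ∧ PAvoids (appendMax τ) π ∧ numOcc τ π = 1} with hs
    set t : Set (Equiv.Perm (Fin (m + 1))) :=
      {π | AvoidsBoth π ∧ numOcc τ π = 1} with ht
    have hst : s ⊆ t := fun π hπ => ⟨hπ.1, hπ.2.2⟩
    have hcard : s.ncard = t.ncard := by
      rw [← Nat.card_coe_set_eq, ← Nat.card_coe_set_eq]
      exact h
    have hset : s = t := Set.eq_of_subset_of_ncard_le hst hcard.ge (Set.toFinite t)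
    have hmem : appendMax τ ∈ t := ⟨⟨appendMax_avoids τ p1243 (by decide) hτ.1,
      appendMax_avoids τ p2143 (by decide) hτ.2⟩, numOcc_appendMax hm τ hneF⟩
    rw [← hset] at hmem
    exact hmem.2.1 (pcontains_self _)
end
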